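/- For even n = 2k with n ≥ 4, the schedule generated by the circle design has guaranteed rest time exactly k-2. -/

import Mathlib

/-- `f` lists the games of a single round-robin tournament on `n` teams:
positions `0, ..., N-1` are in bijection with the unordered pairs of distinct teams. -/
def isSchedule (n N : ℕ) (f : ℕ → Sym2 (Fin n)) : Prop :=
  (∀ i, i < N → ¬ (f i).IsDiag) ∧
  ∀ p : Sym2 (Fin n), ¬ p.IsDiag → ∃! i, i < N ∧ f i = p

/-- The schedule has guaranteed rest time at least `b`: any two games involving a
common team `t` are separated by at least `b` games not involving `t`. -/
def hasRest (n N : ℕ) (f : ℕ → Sym2 (Fin n)) (b : ℕ) : Prop :=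
  ∀ t : Fin n, ∀ i j, i < j → j < N → t ∈ f i → t ∈ f j →
    b ≤ ((Finset.Ioo i j).filter (fun l => t ∉ f l)).card

/-- Number of games played by team `t` in the first `m` games. -/
def played (n : ℕ) (f : ℕ → Sym2 (Fin n)) (t : Fin n) (m : ℕ) : ℕ :=
  ((Finset.range m).filter (fun i => t ∈ f i)).card

/-- The games-played difference index is at most `p`. -/
def gpLe (n N : ℕ) (f : ℕ → Sym2 (Fin n)) (p : ℕ) : Prop :=
  ∀ m, m ≤ N → ∀ t1 t2 : Fin n, played n f t1 m ≤ played n f t2 m + p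

/-- The rest of team `t` going into the game at position `i`: the number of games since
`t`'s previous game, where all teams play an imaginary game one slot before game `0`. -/
def rest (n : ℕ) (f : ℕ → Sym2 (Fin n)) (t : Fin n) (i : ℕ) : ℕ :=
  ((Finset.range i).filter (fun j => ∀ l, j ≤ l → l < i → t ∉ f l)).card

/-- The rest difference index is at most `d`. -/
def rdLe (n N : ℕ) (f : ℕ → Sym2 (Fin n)) (d : ℕ) : Prop :=
  ∀ i, i < N → ∀ t1 t2 : Fin n, t1 ∈ f i → t2 ∈ f i →
    rest n f t1 i ≤ rest n f t2 i + d

/-- Circle design for `n = 2k` teams (0-indexed teams; team `t` is team `t+1` of the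
paper): team `0` is fixed at the top-left; the other `2k-1` teams occupy cyclic
positions `0, ..., 2k-2` (top-row columns `1..k-1` left to right, then bottom-row
columns `k-1` down to `0`), each rotating one step per round.
`circleTeamE k hk r c` is the team at cyclic position `c` in round `r`. -/
def circleTeamE (k : ℕ) (hk : 0 < k) (r c : ℕ) : Fin (2*k) :=
  ⟨(c + (2*k-1) - r % (2*k-1)) % (2*k-1) + 1, by
    have h := Nat.mod_lt (c + (2*k-1) - r % (2*k-1)) (y := 2*k-1) (by omega)
    omega⟩

/-- The `i`-th game (0-indexed) of the asynchronous circle-design schedule for `2k`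
teams: round `i / k`, column `i % k`, columns read left to right. -/
def circleGameE (k : ℕ) (hk : 0 < k) (i : ℕ) : Sym2 (Fin (2*k)) :=
  if i % k = 0 then s(⟨0, by omega⟩, circleTeamE k hk (i / k) (2*k-2))
  else s(circleTeamE k hk (i / k) (i % k - 1), circleTeamE k hk (i / k) (2*k-2 - i % k))

/-- For even `n = 2k ≥ 4`, the circle-design schedule has guaranteed rest time exactly
`k-2`. -/
def colP (k p : ℕ) : ℕ := if p = 2*k-2 then 0 else if p ≤ k-2 then p+1 else 2*k-2-p

def colT (k : ℕ) (t : Fin (2*k)) (r : ℕ) : ℕ :=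
  if t.val = 0 then 0 else colP k ((t.val - 1 + r) % (2*k-1))

lemma colP_lt (k p : ℕ) (hk : 2 ≤ k) (hp : p < 2*k-1) : colP k p < k := by
  unfold colP; split_ifs <;> omega

lemma colT_lt (k : ℕ) (hk : 2 ≤ k) (t : Fin (2*k)) (r : ℕ) : colT k t r < k := by
  unfold colT
  split_ifs with h
  · omega
  · exact colP_lt k _ hk (Nat.mod_lt _ (by omega))

lemma teamEq (k : ℕ) (hk : 2 ≤ k) (hk' : 0 < k) (r c : ℕ) (hc : c < 2*k-1)
    (t : Fin (2*k)) (ht : 1 ≤ t.val) :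
    circleTeamE k hk' r c = t ↔ c = (t.val - 1 + r) % (2*k-1) := by
  set m := 2*k-1 with hm
  have hm0 : 0 < m := by omega
  have hr : r % m < m := Nat.mod_lt r hm0
  set X := (c + m - r % m) % m with hX
  have hXm : X < m := Nat.mod_lt _ hm0
  have e0 : m*(r/m+1) = m*(r/m) + m := by ring
  have e1 : c + m - r % m + r = c + m*(r/m+1) := by
    have := Nat.div_add_mod r m; omega
  have e2 : (X + r) % m = c := by
    rw [hX, Nat.mod_add_mod, e1, Nat.add_mul_mod_self_left, Nat.mod_eq_of_lt hc]
  have hval : (circleTeamE k hk' r c).val = X + 1 := rfl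
  constructor
  · intro h
    have hx : X + 1 = t.val := by rw [← hval, h]
    rw [← e2]
    congr 1
    omega
  · intro h
    have ht1 : t.val - 1 < m := by have := t.isLt; omega
    have h3 : X + r ≡ (t.val - 1) + r [MOD m] := by
      unfold Nat.ModEq
      rw [e2, h]
    have h4 : X ≡ t.val - 1 [MOD m] := Nat.ModEq.add_right_cancel' r h3
    have h5 : X = t.val - 1 := by
      have : X % m = (t.val - 1) % m := h4
      rwa [Nat.mod_eq_of_lt hXm, Nat.mod_eq_of_lt ht1] at this
    apply Fin.ext
    rw [hval]
    omega

lemma mem_iff (k : ℕ) (hk : 2 ≤ k) (hk' : 0 < k) (t : Fin (2*k)) (i : ℕ) :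
    t ∈ circleGameE k hk' i ↔ i % k = colT k t (i / k) := by
  set r := i / k with hr
  set c := i % k with hc
  have hck : c < k := Nat.mod_lt _ (by omega)
  have hm0 : (0:ℕ) < 2*k-1 := by omega
  by_cases ht0 : t.val = 0
  · -- team 0
    have hteq : t = (⟨0, by omega⟩ : Fin (2*k)) := Fin.ext ht0
    unfold circleGameE
    rw [← hc, ← hr]
    split_ifs with h0
    · simp only [Sym2.mem_iff]
      constructor
      · intro _; simp [colT, ht0, h0]
      · intro _; left; exact hteq
    · simp only [Sym2.mem_iff]
      constructor
      · rintro (h | h) <;>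
        · exfalso
          have : t.val = _ := congrArg Fin.val h
          simp [circleTeamE] at this
          omega
      · intro h
        exfalso
        simp [colT, ht0] at h
        omega
  · -- team ≥ 1
    have ht1 : 1 ≤ t.val := by omega
    set p := (t.val - 1 + r) % (2*k-1) with hp
    have hpm : p < 2*k-1 := Nat.mod_lt _ hm0
    have hcolT : colT k t r = colP k p := by simp [colT, ht0, hp]
    unfold circleGameE
    rw [← hc, ← hr, hcolT]
    split_ifs with h0
    · simp only [Sym2.mem_iff]
      rw [eq_comm (a := t) (b := circleTeamE k hk' r (2*k-2)),
        teamEq k hk hk' r (2*k-2) (by omega) t ht1]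
      constructor
      · rintro (h | h)
        · exact absurd (congrArg Fin.val h) (by simpa using ht0)
        · rw [h0]; unfold colP; rw [← h.symm]; simp [hp]
      · intro h
        right
        unfold colP at h
        split_ifs at h <;> omega
    · simp only [Sym2.mem_iff]
      rw [eq_comm (a := t) (b := circleTeamE k hk' r (c-1)),
        eq_comm (a := t) (b := circleTeamE k hk' r (2*k-2-c)),
        teamEq k hk hk' r (c-1) (by omega) t ht1,
        teamEq k hk hk' r (2*k-2-c) (by omega) t ht1]
      unfold colP
      split_ifs <;> omega

lemma colT_step (k : ℕ) (hk : 2 ≤ k) (t : Fin (2*k)) (r : ℕ) :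
    colT k t r ≤ colT k t (r+1) + 1 := by
  unfold colT
  split_ifs with h
  · omega
  · set m := 2*k-1 with hm
    have hm0 : (0:ℕ) < m := by omega
    set p := (t.val - 1 + r) % m with hp
    have hpm : p < m := Nat.mod_lt _ hm0
    have hstep : (t.val - 1 + (r+1)) % m = (p + 1) % m := by
      conv_rhs => rw [hp]
      rw [Nat.mod_add_mod]
      congr 1
    have hq : (p = 2*k-2 ∧ (p+1) % m = 0) ∨ (p < 2*k-2 ∧ (p+1) % m = p+1) := by
      by_cases hpe : p = 2*k-2
      · left
        refine ⟨hpe, ?_⟩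
        have : p + 1 = m := by omega
        rw [this, Nat.mod_self]
      · right
        exact ⟨by omega, Nat.mod_eq_of_lt (by omega)⟩
    rw [hstep]
    rcases hq with ⟨h1, h2⟩ | ⟨h1, h2⟩ <;> rw [h2] <;> unfold colP <;> split_ifs <;> omega

lemma game_decomp (k : ℕ) (hk : 2 ≤ k) (hk' : 0 < k) (t : Fin (2*k)) (l : ℕ)
    (h : t ∈ circleGameE k hk' l) : l = (l/k)*k + colT k t (l/k) := by
  rw [← (mem_iff k hk hk' t l).mp h]
  have := Nat.div_add_mod l k
  have : (l/k)*k = k*(l/k) := Nat.mul_comm _ _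
  omega

theorem stmt9' (k : ℕ) (hk : 2 ≤ k) (hk0 : 0 < k) :
    (∀ t : Fin (2*k), ∀ i j, i < j → j < 2*k*(2*k-1)/2 → t ∈ circleGameE k hk0 i →
      t ∈ circleGameE k hk0 j →
      (k-2) ≤ ((Finset.Ioo i j).filter (fun l => t ∉ circleGameE k hk0 l)).card) := by
  have hk' : (0:ℕ) < k := by omega
  intro t i j hij hjN hti htj
  set f := circleGameE k hk' with hf
  have hi : i = (i/k)*k + colT k t (i/k) := game_decomp k hk hk' t i hti
  have hj : j = (j/k)*k + colT k t (j/k) := game_decomp k hk hk' t j htj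
  set r := i/k with hr
  set r' := j/k with hr'
  have hci : colT k t r < k := colT_lt k hk t r
  have hcj : colT k t r' < k := colT_lt k hk t r'
  have hrr : r < r' := by
    rcases Nat.lt_or_ge r r' with h | h
    · exact h
    · exfalso
      have h2 : r' ≤ r := h
      have h3 : r ≤ r' := Nat.div_le_div_right hij.le
      have : r = r' := le_antisymm h3 h2
      rw [this] at hi
      omega
  set T := (Finset.Ioo i j).filter (fun l => t ∈ f l) with hT
  set S := (Finset.Ioo i j).filter (fun l => t ∉ f l) with hS
  have hsum : T.card + S.card = j - i - 1 := by
    rw [hT, hS, Finset.card_filter_add_card_filter_not, Nat.card_Ioo]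
  have hTsub : T ⊆ (Finset.Ioo r r').image (fun s => s*k + colT k t s) := by
    intro l hl
    rw [hT, Finset.mem_filter, Finset.mem_Ioo] at hl
    obtain ⟨⟨hil, hlj⟩, htl⟩ := hl
    have hld : l = (l/k)*k + colT k t (l/k) := game_decomp k hk hk' t l htl
    rw [Finset.mem_image]
    refine ⟨l/k, ?_, hld.symm⟩
    rw [Finset.mem_Ioo]
    have h1 : r ≤ l/k := Nat.div_le_div_right hil.le
    have h2 : l/k ≤ r' := Nat.div_le_div_right hlj.le
    constructor
    · rcases Nat.lt_or_ge r (l/k) with h | h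
      · exact h
      · exfalso
        have : r = l/k := le_antisymm h1 h
        rw [← this] at hld
        omega
    · rcases Nat.lt_or_ge (l/k) r' with h | h
      · exact h
      · exfalso
        have : l/k = r' := le_antisymm h2 h
        rw [this] at hld
        omega
  have hTcard : T.card ≤ r' - r - 1 := by
    calc T.card ≤ ((Finset.Ioo r r').image (fun s => s*k + colT k t s)).card :=
          Finset.card_le_card hTsub
      _ ≤ (Finset.Ioo r r').card := Finset.card_image_le
      _ = r' - r - 1 := Nat.card_Ioo r r'
  rcases Nat.lt_or_ge r' (r+2) with hcase | hcase
  · -- r' = r + 1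
    have hr1 : r' = r + 1 := by omega
    have hmul : (r+1)*k = r*k + k := by ring
    have hstep := colT_step k hk t r
    rw [hr1] at hj hTcard
    omega
  · -- r' ≥ r + 2
    obtain ⟨d, hd⟩ : ∃ d, r' = r + d + 2 := ⟨r'-r-2, by omega⟩
    have hmul : (r+d+2)*k = r*k + d*k + 2*k := by ring
    have hdk : d*2 ≤ d*k := Nat.mul_le_mul_left d hk
    rw [hd] at hj hTcard
    omega

theorem stmt9neg (k : ℕ) (hk : 2 ≤ k) (hk0 : 0 < k) :
    ∃ (t : Fin (2*k)) (i j : ℕ), i < j ∧ j < 2*k*(2*k-1)/2 ∧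
      t ∈ circleGameE k hk0 i ∧ t ∈ circleGameE k hk0 j ∧
      ((Finset.Ioo i j).filter (fun l => t ∉ circleGameE k hk0 l)).card < k-1 := by
  have hk' : (0:ℕ) < k := by omega
  refine ⟨⟨k, by omega⟩, k-1, 2*k-2, by omega, ?_, ?_, ?_, ?_⟩
  · have e : 2*k*(2*k-1) = 2*(k*(2*k-1)) := by ring
    have e2 : 2*k*(2*k-1)/2 = k*(2*k-1) := by
      rw [e, Nat.mul_div_cancel_left _ (by norm_num : (0:ℕ) < 2)]
    have h3 : 2*(2*k-1) ≤ k*(2*k-1) := Nat.mul_le_mul_right _ hk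
    omega
  · rw [mem_iff k hk _ _ _]
    rw [Nat.mod_eq_of_lt (by omega : k-1 < k), Nat.div_eq_of_lt (by omega : k-1 < k)]
    simp only [colT, colP]
    rw [Nat.add_zero, Nat.mod_eq_of_lt (by omega : k-1 < 2*k-1)]
    split_ifs <;> omega
  · rw [mem_iff k hk _ _ _]
    have hdiv : (2*k-2)/k = 1 := Nat.div_eq_of_lt_le (by omega) (by omega)
    have hmod : (2*k-2)%k = k-2 := by
      have := Nat.div_add_mod (2*k-2) k
      rw [hdiv] at this
      omega
    rw [hdiv, hmod]
    simp only [colT, colP]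
    rw [Nat.mod_eq_of_lt (by omega : k-1+1 < 2*k-1)]
    split_ifs <;> omega
  · have hall : ∀ l ∈ Finset.Ioo (k-1) (2*k-2),
        ((⟨k, by omega⟩ : Fin (2*k)) ∉ circleGameE k hk' l) := by
      intro l hl
      rw [Finset.mem_Ioo] at hl
      intro htl
      rw [mem_iff k hk _ _ _] at htl
      have hlk : l/k = 1 := Nat.div_eq_of_lt_le (by omega) (by omega)
      have hml := Nat.div_add_mod l k
      rw [hlk] at hml
      rw [hlk] at htl
      simp only [colT, colP] at htl
      rw [Nat.mod_eq_of_lt (by omega : k-1+1 < 2*k-1)] at htl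
      split_ifs at htl <;> omega
    rw [Finset.filter_true_of_mem hall, Nat.card_Ioo]
    omega

theorem stmt9 (k : ℕ) (hk : 2 ≤ k) :
    hasRest (2*k) (2*k*(2*k-1)/2) (circleGameE k (by omega)) (k-2) ∧
    ¬ hasRest (2*k) (2*k*(2*k-1)/2) (circleGameE k (by omega)) (k-1) := by
  constructor
  · exact stmt9' k hk (by omega)
  · intro h
    obtain ⟨t, i, j, h1, h2, h3, h4, h5⟩ := stmt9neg k hk (by omega)
    exact absurd (h t i j h1 h2 h3 h4) (by omega)
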